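/- Let 0 ≤ l ≤ h with h > 0, and for a point p ∈ ℝ² define its mapped point c ∈ ℝ² by c[1] = p[1] + p[2]/h and c[2] = l·p[1] + p[2]. Then for any two distinct points p, p' ∈ ℝ² with mapped points c, c': p eclipse-dominates p' with respect to [l, h] if and only if c[1] ≤ c'[1] and c[2] ≤ c'[2]. (Theorem 4: the two-dimensional eclipse problem transforms to the skyline problem via the intercept mapping.) -/

import Mathlib

/-- Theorem 4: the two-dimensional eclipse problem transforms to the skyline
problem via the intercept mapping `c = (p₁ + p₂/h, l·p₁ + p₂)`. -/
theorem eclipse_iff_mapped_skyline_two_dim (l h : ℝ) (h0l : 0 ≤ l) (hlh : l ≤ h)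
    (hh : 0 < h) (p p' : ℝ × ℝ) (hne : p ≠ p') :
    (p ≠ p' ∧ ∀ r ∈ Set.Icc l h, r * p.1 + p.2 ≤ r * p'.1 + p'.2) ↔
      (p.1 + p.2 / h ≤ p'.1 + p'.2 / h ∧ l * p.1 + p.2 ≤ l * p'.1 + p'.2) := by
  have key : ∀ a b : ℝ, h * (a + b / h) = h * a + b := by
    intro a b; field_simp
  constructor
  · rintro ⟨-, hall⟩
    have h1 := hall h ⟨hlh, le_refl h⟩
    have h2 := hall l ⟨le_refl l, hlh⟩
    refine ⟨(mul_le_mul_iff_right₀ hh).mp ?_, h2⟩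
    rw [key, key]; exact h1
  · rintro ⟨h1, h2⟩
    refine ⟨hne, fun r hr => ?_⟩
    obtain ⟨hrl, hrh⟩ := hr
    have hH : h * p.1 + p.2 ≤ h * p'.1 + p'.2 := by
      rw [← key, ← key]; exact (mul_le_mul_iff_right₀ hh).mpr h1
    rcases eq_or_lt_of_le hlh with he | hlt
    · have hrl' : r = l := le_antisymm (he ▸ hrh) hrl
      rw [hrl']; exact h2
    · have A := mul_le_mul_of_nonneg_left h2 (by linarith : (0:ℝ) ≤ h - r)
      have B := mul_le_mul_of_nonneg_left hH (by linarith : (0:ℝ) ≤ r - l)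
      have C : (h - l) * (r * p.1 + p.2) ≤ (h - l) * (r * p'.1 + p'.2) := by
        nlinarith [A, B]
      exact (mul_le_mul_iff_right₀ (by linarith : (0:ℝ) < h - l)).mp C
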